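/- In a 4-algebra A over a field of characteristic not 2 or 3, the identity a² · (b·c) + 2(a·b)·(a·c) = 0 holds for all a, b, c ∈ A. -/
import Mathlib


structure FourAlgebra (k : Type*) (A : Type*) [Field k] [AddCommGroup A] [Module k A] where
  mul : A →ₗ[k] A →ₗ[k] A
  comm : ∀ a b : A, mul a b = mul b a
  four : ∀ a : A, mul (mul a a) (mul a a) = 0

theorem stmt3 (k A : Type*) [Field k] [AddCommGroup A] [Module k A]
    (h2 : (2 : k) ≠ 0) (h3 : (3 : k) ≠ 0) (F : FourAlgebra k A) (a b c : A) :
    F.mul (F.mul a a) (F.mul b c) + 2 • F.mul (F.mul a b) (F.mul a c) = 0 := by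
  set m := F.mul with hm
  have cancel : ∀ z : A, (2 : k) • z = 0 → z = 0 := by
    intro z hz
    rcases smul_eq_zero.mp hz with h | h
    · exact absurd h h2
    · exact h
  have sq : ∀ x y : A, m (m x x) (m y y) + 2 • m (m x y) (m x y) = 0 := by
    intro x y
    have H1 := F.four (x + y)
    have H2 := F.four (x - y)
    have H3 := F.four x
    have H4 := F.four y
    rw [← hm] at H1 H2 H3 H4
    simp only [map_add, map_sub, LinearMap.add_apply, LinearMap.sub_apply] at H1 H2
    rw [F.comm y x] at H1 H2
    rw [← hm] at H1 H2
    rw [F.comm (m x y) (m x x), F.comm (m y y) (m x x), F.comm (m y y) (m x y)] at H1 H2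
    rw [← hm] at H1 H2
    apply cancel
    apply cancel
    linear_combination (norm := module) H1 + H2 - (2 : k) • H3 - (2 : k) • H4
  have Hbc := sq a (b + c)
  have Hb := sq a b
  have Hc := sq a c
  simp only [map_add, LinearMap.add_apply] at Hbc
  rw [F.comm c b] at Hbc
  rw [← hm] at Hbc
  rw [F.comm (m a c) (m a b)] at Hbc
  rw [← hm] at Hbc
  apply cancel
  linear_combination (norm := module) Hbc - Hb - Hc
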